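/- Let m ≥ 3 be an integer and let (W,S) be a Coxeter system in which, for any two distinct simple reflections s, t ∈ S, the order of st is either m or infinite. If an element w ∈ W admits two distinct reduced expressions, then there exist x, y ∈ W and distinct simple reflections s, t ∈ S with st of order m such that w = x u y and l(w) = l(x) + l(u) + l(y), where u is the longest element of the (finite dihedral) standard parabolic subgroup generated by s and t. -/

import Mathlib

namespace Stmt18

open List CoxeterSystem

open scoped Classical

variable {B W : Type*} [Group W] {M : CoxeterMatrix B} (cs : CoxeterSystem M W)

local prefix:100 "s" => cs.simple
local prefix:100 "π" => cs.wordProd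
local prefix:100 "ℓ" => cs.length

theorem prod_alt_succ (i j : B) (n : ℕ) :
    π (alternatingWord i j (n + 1)) = s (if Even n then j else i) * π (alternatingWord i j n) := by
  rw [alternatingWord_succ', wordProd_cons]

theorem alt_inv_mul (i j : B) (n : ℕ) :
    (π (alternatingWord i j n))⁻¹ * π (alternatingWord i j (n + 1)) =
      (s j * s i) ^ n * s j := by
  have hsc : SemiconjBy (s j) (s i * s j) (s j * s i) := by
    unfold SemiconjBy; group
  have hy : ∀ e : ℕ, ((s i * s j) ^ e)⁻¹ = (s j * s i) ^ e := by
    intro e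
    rw [← inv_pow, mul_inv_rev, cs.inv_simple, cs.inv_simple]
  rcases Nat.even_or_odd n with he | ho
  · obtain ⟨e, rfl⟩ := he
    have h2 : (e + e) / 2 = e := by omega
    have h3 : (e + e + 1) / 2 = e := by omega
    rw [cs.prod_alternatingWord_eq_mul_pow, cs.prod_alternatingWord_eq_mul_pow, h2, h3,
      if_pos ⟨e, rfl⟩, if_neg (by simp [Nat.even_add_one, parity_simps])]
    rw [one_mul, (hsc.pow_right e).eq, ← mul_assoc, hy, ← pow_add]
  · obtain ⟨e, rfl⟩ := ho
    have h2 : (2 * e + 1) / 2 = e := by omega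
    have h3 : (2 * e + 1 + 1) / 2 = e + 1 := by omega
    rw [cs.prod_alternatingWord_eq_mul_pow, cs.prod_alternatingWord_eq_mul_pow, h2, h3,
      if_neg (by simp [parity_simps]), if_pos (by simp [parity_simps])]
    rw [one_mul, mul_inv_rev, cs.inv_simple, mul_assoc, (hsc.pow_right (e + 1)).eq,
      hy, ← mul_assoc, ← pow_add]
    congr 2
    omega

theorem ris_alt (i j : B) (n : ℕ) :
    cs.rightInvSeq (alternatingWord i j n) =
      ((range n).map (fun k => (s j * s i) ^ k * s j)).reverse := by
  induction n with
  | zero => simp [alternatingWord]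
  | succ n ih =>
    rw [alternatingWord_succ']
    dsimp only [rightInvSeq]
    rw [ih, range_succ, map_append, reverse_append]
    simp only [map_cons, map_nil, reverse_cons, reverse_nil, nil_append, cons_append,
      singleton_append]
    congr 1
    rw [mul_assoc, ← prod_alt_succ]
    exact alt_inv_mul cs i j n

theorem count_even_ris_alt (i j : B) (u : W) :
    Even ((cs.rightInvSeq (alternatingWord i j (2 * M i j))).count u) := by
  rw [ris_alt, count_reverse]
  have h : 2 * M i j = M i j + M i j := two_mul _
  rw [h, range_add, map_append, count_append]
  have heq : ((range (M i j)).map fun x => M i j + x).map (fun k => (s j * s i) ^ k * s j)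
      = (range (M i j)).map (fun k => (s j * s i) ^ k * s j) := by
    rw [map_map]
    apply map_congr_left
    intro k _
    show (s j * s i) ^ (M i j + k) * s j = (s j * s i) ^ k * s j
    rw [pow_add, cs.simple_mul_simple_pow', one_mul]
  rw [heq]
  exact ⟨_, rfl⟩

/-- The sign representation on `W × ℤˣ` (Bourbaki's cocycle). -/
noncomputable def E (i : B) : Equiv.Perm (W × ℤˣ) :=
  Function.Involutive.toPerm
    (fun p => (s i * p.1 * s i, if p.1 = s i then -p.2 else p.2))
    (by
      rintro ⟨w, ε⟩
      simp only
      have h1 : s i * (s i * w * s i) * s i = w := by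
        rw [← mul_assoc, ← mul_assoc, cs.simple_mul_simple_self, one_mul, mul_assoc,
          cs.simple_mul_simple_self, mul_one]
      have h2 : (s i * w * s i = s i) ↔ (w = s i) := by
        constructor
        · intro h
          have := congrArg (fun x => s i * x * s i) h
          simpa [h1, cs.simple_mul_simple_self] using this
        · rintro rfl
          rw [cs.simple_mul_simple_self, one_mul]
      by_cases h : w = s i
      · simp [h, h2, cs.simple_mul_simple_self, h1]
      · simp [h, h2, h1])

theorem E_apply (i : B) (p : W × ℤˣ) :
    E cs i p = (s i * p.1 * s i, if p.1 = s i then -p.2 else p.2) := by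
  simp [E, Function.Involutive.coe_toPerm]
  rfl

theorem prodE (ω : List B) (p : W × ℤˣ) :
    ((ω.map (E cs)).prod) p =
      (π ω * p.1 * (π ω)⁻¹, (-1 : ℤˣ) ^ ((cs.rightInvSeq ω).count p.1) * p.2) := by
  induction ω with
  | nil => simp
  | cons c ω ih =>
    rw [map_cons, prod_cons, Equiv.Perm.mul_apply, ih, E_apply]
    have hcnt : (cs.rightInvSeq (c :: ω)).count p.1
        = (if ((π ω)⁻¹ * s c * π ω) = p.1 then 1 else 0) + (cs.rightInvSeq ω).count p.1 := by
      dsimp only [rightInvSeq]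
      rw [count_cons]
      by_cases h : (π ω)⁻¹ * s c * π ω = p.1 <;> simp [h] <;> omega
    have hfst : s c * (π ω * p.1 * (π ω)⁻¹) * s c = π (c :: ω) * p.1 * (π (c :: ω))⁻¹ := by
      rw [wordProd_cons, mul_inv_rev, cs.inv_simple]
      group
    by_cases h : π ω * p.1 * (π ω)⁻¹ = s c
    · have h' : (π ω)⁻¹ * s c * π ω = p.1 := by rw [← h]; group
      rw [if_pos h, hcnt, if_pos h']
      refine Prod.ext hfst ?_
      show -((-1 : ℤˣ) ^ (cs.rightInvSeq ω).count p.1 * p.2) = _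
      rw [pow_add, pow_one, neg_one_mul, neg_mul]
    · have h' : ¬ ((π ω)⁻¹ * s c * π ω = p.1) := by
        intro hh
        apply h
        rw [← hh]; group
      rw [if_neg h, hcnt, if_neg h']
      refine Prod.ext hfst ?_
      simp

theorem pow_eq_prod_map_E (i j : B) (k : ℕ) :
    (E cs i * E cs j) ^ k = ((alternatingWord i j (2 * k)).map (E cs)).prod := by
  induction k with
  | zero => simp [alternatingWord]
  | succ k ih =>
    have halt : alternatingWord i j (2 * (k + 1)) = i :: j :: alternatingWord i j (2 * k) := by
      have h1 : 2 * (k + 1) = (2 * k + 1) + 1 := by omega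
      rw [h1, alternatingWord_succ', alternatingWord_succ']
      simp [Nat.even_add_one, parity_simps]
    rw [halt, map_cons, map_cons, prod_cons, prod_cons, ← ih, pow_succ', mul_assoc]

theorem E_liftable : M.IsLiftable (E cs) := by
  intro i j
  apply Equiv.ext
  intro p
  rw [pow_eq_prod_map_E, prodE]
  have h1 : π (alternatingWord i j (2 * M i j)) = 1 := by
    rw [cs.prod_alternatingWord_eq_mul_pow, if_pos (even_two_mul _), one_mul]
    have : 2 * M i j / 2 = M i j := by omega
    rw [this, cs.simple_mul_simple_pow]
  rw [h1]
  have h2 := count_even_ris_alt cs i j p.1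
  rw [h2.neg_one_pow]
  simp

noncomputable def rho : W →* Equiv.Perm (W × ℤˣ) := cs.lift ⟨E cs, E_liftable cs⟩

theorem rho_wordProd (ω : List B) : rho cs (π ω) = ((ω.map (E cs)).prod) := by
  induction ω with
  | nil => simp [rho]
  | cons c ω ih =>
    rw [wordProd_cons, map_mul, ih, map_cons, prod_cons]
    congr 1
    exact cs.lift_apply_simple (E_liftable cs) c

theorem count_parity (ω ω' : List B) (h : π ω = π ω') (u : W) :
    (Even ((cs.rightInvSeq ω).count u) ↔ Even ((cs.rightInvSeq ω').count u)) := by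
  have e : ((ω.map (E cs)).prod) (u, 1) = ((ω'.map (E cs)).prod) (u, 1) := by
    rw [← rho_wordProd, ← rho_wordProd, h]
  have key : ((-1 : ℤˣ)) ^ ((cs.rightInvSeq ω).count u)
      = (-1 : ℤˣ) ^ ((cs.rightInvSeq ω').count u) := by
    have := congrArg Prod.snd ((prodE cs ω (u, 1)).symm.trans (e.trans (prodE cs ω' (u, 1))))
    simpa using this
  rcases Nat.even_or_odd ((cs.rightInvSeq ω).count u) with hc | hc <;>
    rcases Nat.even_or_odd ((cs.rightInvSeq ω').count u) with hc' | hc'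
  · simp [hc, hc']
  · rw [hc.neg_one_pow, hc'.neg_one_pow] at key
    exact absurd key (by decide)
  · rw [hc.neg_one_pow, hc'.neg_one_pow] at key
    exact absurd key (by decide)
  · simp [← Nat.not_odd_iff_even, hc, hc']

theorem mem_rightInvSeq_of_isRightDescent {w : W} {a : B} (hd : cs.IsRightDescent w a)
    {ω : List B} (hred : cs.IsReduced ω) (hw : π ω = w) : s a ∈ cs.rightInvSeq ω := by
  have hd' : ℓ (w * s a) < ℓ w := hd
  obtain ⟨τ, hτred, hτ⟩ := cs.exists_reduced_word' (w * s a)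
  have hπ : π (τ.concat a) = w := by
    rw [wordProd_concat, ← hτ, cs.simple_mul_simple_cancel_right]
  have hcnt0 : (cs.rightInvSeq τ).count (s a) = 0 := by
    by_contra hc
    have hmem : s a ∈ cs.rightInvSeq τ := count_pos_iff.mp (Nat.pos_of_ne_zero hc)
    obtain ⟨-, hlt⟩ := cs.isRightInversion_of_mem_rightInvSeq hτred hmem
    rw [← hτ, cs.simple_mul_simple_cancel_right] at hlt
    omega
  have hcnt2 : (cs.rightInvSeq (τ.concat a)).count (s a) = 1 := by
    rw [cs.rightInvSeq_concat, concat_eq_append, count_append]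
    have hfix : (MulAut.conj (s a)) (s a) = s a := by
      simp [MulAut.conj]
    have hcm := count_map_of_injective (cs.rightInvSeq τ) (⇑(MulAut.conj (s a)))
      (MulAut.conj (s a)).injective (s a)
    rw [hfix] at hcm
    rw [hcm, hcnt0]
    simp
  have hparity := count_parity cs ω (τ.concat a) (hw.trans hπ.symm) (s a)
  rw [hcnt2] at hparity
  have hne : (cs.rightInvSeq ω).count (s a) ≠ 0 := by
    intro h0
    rw [h0] at hparity
    simpa using hparity.mp Even.zero
  exact count_pos_iff.mp (Nat.pos_of_ne_zero hne)

theorem exchange {w : W} {a : B} (hd : cs.IsRightDescent w a)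
    {ω : List B} (hred : cs.IsReduced ω) (hw : π ω = w) :
    ∃ k < ω.length, π (ω.eraseIdx k) = w * s a := by
  have hmem := mem_rightInvSeq_of_isRightDescent cs hd hred hw
  obtain ⟨k, hk, hget⟩ := mem_iff_getElem.mp hmem
  have hk' : k < ω.length := by simpa using hk
  refine ⟨k, hk', ?_⟩
  have h := cs.wordProd_mul_getD_rightInvSeq ω k
  rw [getD_eq_getElem _ _ hk, hget, hw] at h
  exact h.symm

theorem alt_drop (x y : B) (d n : ℕ) :
    (alternatingWord x y (n + d)).drop d = alternatingWord x y n := by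
  induction d with
  | zero => simp
  | succ d ih =>
    have h : n + (d + 1) = (n + d) + 1 := by omega
    rw [h, alternatingWord_succ', drop_succ_cons, ih]

theorem alt_one (x y : B) : alternatingWord x y 1 = [y] := rfl

theorem em_one (a b : B) {m : ℕ} (hm : 1 ≤ m) (hz : (s a * s b) ^ m = 1) :
    π (alternatingWord a b (m + 1)) = π (alternatingWord b a (m - 1)) := by
  have hy : ∀ e : ℕ, ((s a * s b) ^ e)⁻¹ = (s b * s a) ^ e := by
    intro e
    rw [← inv_pow, mul_inv_rev, cs.inv_simple, cs.inv_simple]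
  rcases Nat.even_or_odd m with he | ho
  · obtain ⟨e, rfl⟩ := he
    have he1 : 1 ≤ e := by omega
    have h2 : (e + e + 1) / 2 = e := by omega
    have h3 : (e + e - 1) / 2 = e - 1 := by omega
    rw [cs.prod_alternatingWord_eq_mul_pow, cs.prod_alternatingWord_eq_mul_pow, h2, h3,
      if_neg (by simp [Nat.even_add_one, parity_simps]),
      if_neg (by rw [Nat.even_sub (by omega)]; simp [parity_simps])]
    -- goal : s b * (s a * s b)^e = s a * (s b * s a)^(e-1)
    apply mul_left_cancel (a := s a)
    rw [← mul_assoc, ← mul_assoc, cs.simple_mul_simple_self, one_mul]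
    -- (s a * s b) * (s a*s b)^e = (s b * s a)^(e-1)
    rw [← hy, ← pow_succ']
    apply eq_inv_of_mul_eq_one_left
    rw [← pow_add]
    have : e + 1 + (e - 1) = e + e := by omega
    rw [this, hz]
  · obtain ⟨e, rfl⟩ := ho
    have h2 : (2 * e + 1 + 1) / 2 = e + 1 := by omega
    have h3 : (2 * e + 1 - 1) / 2 = e := by omega
    rw [cs.prod_alternatingWord_eq_mul_pow, cs.prod_alternatingWord_eq_mul_pow, h2, h3,
      if_pos (by simp [parity_simps]),
      if_pos (by simp [parity_simps])]
    rw [one_mul, one_mul, ← hy]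
    apply eq_inv_of_mul_eq_one_left
    rw [← pow_add]
    have : e + 1 + e = 2 * e + 1 := by omega
    rw [this, hz]

theorem mul_simple_alt (a b : B) {m : ℕ} (hm : 1 ≤ m) (hz : (s a * s b) ^ m = 1)
    (d : B) (hd : d = a ∨ d = b) (n : ℕ) (hn : n ≤ m) :
    ∃ n' ≤ m, s d * π (alternatingWord a b n) = π (alternatingWord a b n') ∨
      s d * π (alternatingWord a b n) = π (alternatingWord b a n') := by
  by_cases hdc : d = (if Even n then b else a)
  · have hstep : s d * π (alternatingWord a b n) = π (alternatingWord a b (n + 1)) := by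
      rw [prod_alt_succ cs a b n, hdc]
    by_cases hnm : n = m
    · subst hnm
      refine ⟨n - 1, by omega, Or.inr ?_⟩
      rw [hstep, em_one cs a b hm hz]
    · exact ⟨n + 1, by omega, Or.inl hstep⟩
  · match n with
    | 0 =>
      rcases hd with rfl | rfl
      · refine ⟨1, hm, Or.inr ?_⟩
        rw [alt_one]
        simp [alternatingWord]
      · refine ⟨1, hm, Or.inl ?_⟩
        rw [alt_one]
        simp [alternatingWord]
    | (k + 1) =>
      have hd' : d = (if Even k then b else a) := by
        rcases hd with rfl | rfl <;> by_cases hk : Even k <;>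
          simp [hk, Nat.even_add_one] at hdc ⊢
      refine ⟨k, by omega, Or.inl ?_⟩
      rw [prod_alt_succ cs a b k, ← hd', ← mul_assoc]
      rw [← hd'] at *
      rw [cs.simple_mul_simple_self, one_mul]

theorem swap_pow (a b : B) {m : ℕ} (hz : (s a * s b) ^ m = 1) : (s b * s a) ^ m = 1 := by
  have : s b * s a = (s a * s b)⁻¹ := by rw [mul_inv_rev, cs.inv_simple, cs.inv_simple]
  rw [this, inv_pow, hz, inv_one]

theorem closure_rep (a b : B) {m : ℕ} (hm : 1 ≤ m) (hz : (s a * s b) ^ m = 1)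
    {v : W} (hv : v ∈ Subgroup.closure {s a, s b}) :
    ∃ n ≤ m, v = π (alternatingWord a b n) ∨ v = π (alternatingWord b a n) := by
  have hz' := swap_pow cs a b hz
  have hstep : ∀ x ∈ ({s a, s b} : Set W), ∀ y : W,
      (∃ n ≤ m, y = π (alternatingWord a b n) ∨ y = π (alternatingWord b a n)) →
      (∃ n ≤ m, x * y = π (alternatingWord a b n) ∨ x * y = π (alternatingWord b a n)) := by
    rintro x hx y ⟨n, hn, hy | hy⟩ <;> subst hy <;>
      rcases hx with rfl | rfl
    · obtain ⟨n', hn', h⟩ := mul_simple_alt cs a b hm hz a (Or.inl rfl) n hn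
      exact ⟨n', hn', h⟩
    · obtain ⟨n', hn', h⟩ := mul_simple_alt cs a b hm hz b (Or.inr rfl) n hn
      exact ⟨n', hn', h⟩
    · obtain ⟨n', hn', h⟩ := mul_simple_alt cs b a hm hz' a (Or.inr rfl) n hn
      exact ⟨n', hn', h.symm⟩
    · obtain ⟨n', hn', h⟩ := mul_simple_alt cs b a hm hz' b (Or.inl rfl) n hn
      exact ⟨n', hn', h.symm⟩
  refine Subgroup.closure_induction_left ?_ ?_ ?_ hv
  · exact ⟨0, by omega, Or.inl (by simp [alternatingWord])⟩
  · intro x hx y _ hy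
    exact hstep x hx y hy
  · intro x hx y _ hy
    have hxi : x⁻¹ = x := by
      rcases hx with rfl | rfl
      · exact cs.inv_simple a
      · exact cs.inv_simple b
    rw [hxi]
    exact hstep x hx y hy

theorem closure_length_le (a b : B) {m : ℕ} (hm : 1 ≤ m) (hz : (s a * s b) ^ m = 1)
    {v : W} (hv : v ∈ Subgroup.closure {s a, s b}) : ℓ v ≤ m := by
  obtain ⟨n, hn, h | h⟩ := closure_rep cs a b hm hz hv <;> subst h <;>
    exact le_trans (le_trans (cs.length_wordProd_le _) (by rw [length_alternatingWord])) hn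

theorem alt_mem_closure (a b : B) (n : ℕ) :
    π (alternatingWord a b n) ∈ Subgroup.closure {s a, s b} := by
  induction n with
  | zero =>
    show π (alternatingWord a b 0) ∈ _
    simp only [alternatingWord, wordProd_nil]
    exact one_mem _
  | succ n ih =>
    rw [prod_alt_succ cs a b n]
    refine mul_mem (Subgroup.subset_closure ?_) ih
    by_cases h : Even n <;> simp [h]

theorem ext_lemma {w : W} {a b : B} (hdb : cs.IsRightDescent w b) {k : ℕ}
    (hchain : ℓ (w * (π (alternatingWord b a k))⁻¹) + k = ℓ w) :
    (ℓ (w * (π (alternatingWord a b (k + 1)))⁻¹) + (k + 1) = ℓ w) ∨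
    (∃ n, 1 ≤ n ∧ n ≤ k ∧ (s a * s b) ^ n = 1) := by
  set v' := w * (π (alternatingWord b a k))⁻¹ with hv'
  obtain ⟨σ, hσred, hσ⟩ := cs.exists_reduced_word' v'
  have hσlen : σ.length = ℓ v' := by rw [hσ]; exact hσred.symm
  have hπω₀ : π (σ ++ alternatingWord b a k) = w := by
    rw [wordProd_append, ← hσ, hv', inv_mul_cancel_right]
  have hω₀len : (σ ++ alternatingWord b a k).length = ℓ w := by
    rw [length_append, length_alternatingWord, hσlen, hchain]
  have hω₀red : cs.IsReduced (σ ++ alternatingWord b a k) := by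
    show ℓ (π _) = _
    rw [hπω₀, hω₀len]
  obtain ⟨r, hr, her⟩ := exchange cs hdb hω₀red hπω₀
  rw [length_append, length_alternatingWord] at hr
  by_cases hcase : r < σ.length
  · left
    rw [eraseIdx_append_of_lt_length hcase] at her
    rw [wordProd_append] at her
    have key : w * (π (alternatingWord a b (k + 1)))⁻¹ = π (σ.eraseIdx r) := by
      have h1 : alternatingWord a b (k + 1) = (alternatingWord b a k).concat b :=
        alternatingWord_succ a b k
      rw [h1, wordProd_concat, mul_inv_rev, cs.inv_simple, ← mul_assoc]
      rw [← her, mul_assoc, mul_inv_cancel, mul_one]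
    have h2 : ℓ (π (σ.eraseIdx r)) ≤ (σ.eraseIdx r).length := cs.length_wordProd_le _
    have h2' : (σ.eraseIdx r).length + 1 = σ.length := length_eraseIdx_add_one hcase
    have h3 : ℓ w ≤ ℓ (w * (π (alternatingWord a b (k + 1)))⁻¹) + (k + 1) := by
      have e1 : w = (w * (π (alternatingWord a b (k + 1)))⁻¹) * π (alternatingWord a b (k + 1)) := by
        rw [inv_mul_cancel_right]
      calc ℓ w = ℓ ((w * (π (alternatingWord a b (k + 1)))⁻¹) * π (alternatingWord a b (k + 1))) := by
            rw [← e1]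
        _ ≤ ℓ (w * (π (alternatingWord a b (k + 1)))⁻¹) + ℓ (π (alternatingWord a b (k + 1))) :=
            cs.length_mul_le _ _
        _ ≤ ℓ (w * (π (alternatingWord a b (k + 1)))⁻¹) + (k + 1) := by
            have := le_trans (cs.length_wordProd_le (alternatingWord a b (k + 1)))
              (le_of_eq (length_alternatingWord a b (k + 1)))
            omega
    have h4 : ℓ (w * (π (alternatingWord a b (k + 1)))⁻¹) = ℓ (π (σ.eraseIdx r)) := by rw [key]
    omega
  · right
    push_neg at hcase
    rw [eraseIdx_append_of_length_le hcase] at her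
    set p := r - σ.length with hp
    have hpk : p < k := by omega
    rw [wordProd_append, ← hσ] at her
    have hw' : w = v' * π (alternatingWord b a k) := by rw [hv', inv_mul_cancel_right]
    have hkey : π ((alternatingWord b a k).eraseIdx p) = π (alternatingWord b a k) * s b := by
      apply mul_left_cancel (a := v')
      rw [her, hw', mul_assoc]
    -- split the erased word
    have hd2 : (alternatingWord b a k).drop (p + 1) = alternatingWord b a (k - (p + 1)) := by
      conv_lhs => rw [show k = (k - (p + 1)) + (p + 1) from by omega]
      exact alt_drop b a (p + 1) (k - (p + 1))
    have hd3 : (alternatingWord b a k).drop p = alternatingWord b a (k - p) := by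
      conv_lhs => rw [show k = (k - p) + p from by omega]
      exact alt_drop b a p (k - p)
    have hsplit : (alternatingWord b a k).eraseIdx p
        = (alternatingWord b a k).take p ++ alternatingWord b a (k - (p + 1)) := by
      rw [eraseIdx_eq_take_drop_succ, hd2]
    have htake : π ((alternatingWord b a k).take p)
        = π (alternatingWord b a k) * (π (alternatingWord b a (k - p)))⁻¹ := by
      have := congrArg cs.wordProd (take_append_drop p (alternatingWord b a k))
      rw [wordProd_append, hd3] at this
      rw [← this, mul_inv_cancel_right]
    have heq2 : s b = (π (alternatingWord b a (k - p)))⁻¹ * π (alternatingWord b a (k - (p + 1))) := by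
      apply mul_left_cancel (a := π (alternatingWord b a k))
      rw [← hkey, hsplit, wordProd_append, htake]
      group
    have hq : k - p = (k - (p + 1)) + 1 := by omega
    rw [hq] at heq2
    set q := k - (p + 1) with hqdef
    have halt := alt_inv_mul cs b a q
    have heq3 : s b = ((s a * s b) ^ q * s a)⁻¹ := by
      rw [← halt, heq2]
      group
    refine ⟨q + 1, by omega, by omega, ?_⟩
    have heq3' : (s a * s b) ^ q * s a = s b := by
      have h6 := congrArg Inv.inv heq3
      rw [inv_inv, cs.inv_simple] at h6
      exact h6.symm
    rw [pow_succ, ← mul_assoc, heq3', cs.simple_mul_simple_self]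

theorem chain_lemma {w : W} {a b : B} (hda : cs.IsRightDescent w a)
    (hdb : cs.IsRightDescent w b) (k : ℕ) :
    (∃ n, 1 ≤ n ∧ n < k ∧ (s a * s b) ^ n = 1) ∨
      ((ℓ (w * (π (alternatingWord a b k))⁻¹) + k = ℓ w) ∧
        (ℓ (w * (π (alternatingWord b a k))⁻¹) + k = ℓ w)) := by
  induction k with
  | zero =>
    right
    constructor <;> simp [alternatingWord]
  | succ k ih =>
    rcases ih with ⟨n, h1, h2, h3⟩ | ⟨hg, hh⟩
    · exact Or.inl ⟨n, h1, by omega, h3⟩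
    · rcases ext_lemma cs hdb hh with hg' | ⟨n, h1, h2, h3⟩
      · rcases ext_lemma cs hda hg with hh' | ⟨n, h1, h2, h3⟩
        · exact Or.inr ⟨hg', hh'⟩
        · exact Or.inl ⟨n, h1, by omega, swap_pow cs b a h3⟩
      · exact Or.inl ⟨n, h1, by omega, h3⟩

theorem descent_lemma {w : W} {a b : B} {m : ℕ} (hm : 1 ≤ m)
    (hda : cs.IsRightDescent w a) (hdb : cs.IsRightDescent w b)
    (hord : orderOf (s a * s b) = m ∨ orderOf (s a * s b) = 0) :
    orderOf (s a * s b) = m ∧ ℓ (w * (π (alternatingWord a b m))⁻¹) + m = ℓ w := by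
  rcases hord with h | h
  · refine ⟨h, ?_⟩
    rcases chain_lemma cs hda hdb m with ⟨n, h1, h2, h3⟩ | ⟨hg, -⟩
    · exfalso
      have hdvd := orderOf_dvd_of_pow_eq_one h3
      rw [h] at hdvd
      have := Nat.le_of_dvd (by omega) hdvd
      omega
    · exact hg
  · exfalso
    rcases chain_lemma cs hda hdb (ℓ w + 1) with ⟨n, h1, h2, h3⟩ | ⟨hg, -⟩
    · have hfin : IsOfFinOrder (s a * s b) :=
        isOfFinOrder_iff_pow_eq_one.mpr ⟨n, by omega, h3⟩
      rw [orderOf_eq_zero_iff] at h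
      exact h hfin
    · omega

theorem main_aux (m : ℕ) (hm : 3 ≤ m)
    (hord : ∀ i j : B, i ≠ j → orderOf (s i * s j) = m ∨ orderOf (s i * s j) = 0)
    (N : ℕ) :
    ∀ w : W, ℓ w ≤ N → ∀ L1 L2 : List B, L1 ≠ L2 →
      π L1 = w → L1.length = ℓ w → π L2 = w → L2.length = ℓ w →
      ∃ (x y : W) (i j : B) (u : W), i ≠ j ∧ orderOf (s i * s j) = m ∧
        u ∈ Subgroup.closure {s i, s j} ∧
        (∀ v ∈ Subgroup.closure {s i, s j}, ℓ v ≤ ℓ u) ∧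
        w = x * u * y ∧ ℓ w = ℓ x + ℓ u + ℓ y := by
  induction N with
  | zero =>
    intro w hw L1 L2 hne h1 h1l h2 h2l
    exfalso
    have e1 : L1 = [] := List.length_eq_zero_iff.mp (by omega)
    have e2 : L2 = [] := List.length_eq_zero_iff.mp (by omega)
    exact hne (e1.trans e2.symm)
  | succ N ih =>
    intro w hw L1 L2 hne h1 h1l h2 h2l
    by_cases h0 : ℓ w = 0
    · exfalso
      have e1 : L1 = [] := List.length_eq_zero_iff.mp (by omega)
      have e2 : L2 = [] := List.length_eq_zero_iff.mp (by omega)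
      exact hne (e1.trans e2.symm)
    · match L1, L2 with
      | [], _ => exact absurd h1l (by simp; omega)
      | _, [] => exact absurd h2l (by simp; omega)
      | a :: T1, b :: T2 =>
        simp only [List.length_cons] at h1l h2l
        rw [wordProd_cons] at h1 h2
        by_cases hab : a = b
        · subst hab
          have hT12 : π T1 = π T2 := mul_left_cancel (h1.trans h2.symm)
          have hTne : T1 ≠ T2 := fun h => hne (by rw [h])
          have hlen1 : ℓ (π T1) ≤ T1.length := cs.length_wordProd_le T1
          have hlen2 : ℓ w ≤ 1 + ℓ (π T1) := by
            calc ℓ w = ℓ (s a * π T1) := by rw [h1]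
              _ ≤ ℓ (s a) + ℓ (π T1) := cs.length_mul_le _ _
              _ ≤ 1 + ℓ (π T1) := by rw [cs.length_simple]
          have hT1red : ℓ (π T1) = T1.length := by omega
          obtain ⟨x, y, i, j, u, hij, hordu, humem, humax, heq, hlen⟩ :=
            ih (π T1) (by omega) T1 T2 hTne rfl hT1red.symm hT12.symm
              (by omega)
          refine ⟨s a * x, y, i, j, u, hij, hordu, humem, humax, ?_, ?_⟩
          · rw [← h1, heq, ← mul_assoc, ← mul_assoc]
          · have e2 : ℓ (s a * x) ≤ ℓ x + 1 := by
              rcases cs.length_simple_mul x a with h | h <;> omega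
            have e3 : ℓ w ≤ ℓ (s a * x) + ℓ u + ℓ y := by
              calc ℓ w = ℓ ((s a * x) * u * y) := by rw [← h1, heq, ← mul_assoc, ← mul_assoc]
                _ ≤ ℓ ((s a * x) * u) + ℓ y := cs.length_mul_le _ _
                _ ≤ ℓ (s a * x) + ℓ u + ℓ y := by
                    have := cs.length_mul_le (s a * x) u
                    omega
            omega
        · -- two distinct left descents a b of w; pass to w⁻¹
          have hda : cs.IsRightDescent w⁻¹ a := by
            show ℓ (w⁻¹ * s a) < ℓ w⁻¹
            have e1 : w⁻¹ * s a = (s a * w)⁻¹ := by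
              rw [mul_inv_rev, cs.inv_simple]
            have e2 : s a * w = π T1 := by
              rw [← h1, cs.simple_mul_simple_cancel_left]
            rw [e1, cs.length_inv, cs.length_inv, e2]
            have := cs.length_wordProd_le T1
            omega
          have hdb : cs.IsRightDescent w⁻¹ b := by
            show ℓ (w⁻¹ * s b) < ℓ w⁻¹
            have e1 : w⁻¹ * s b = (s b * w)⁻¹ := by
              rw [mul_inv_rev, cs.inv_simple]
            have e2 : s b * w = π T2 := by
              rw [← h2, cs.simple_mul_simple_cancel_left]
            rw [e1, cs.length_inv, cs.length_inv, e2]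
            have := cs.length_wordProd_le T2
            omega
          obtain ⟨hordm, hchain⟩ :=
            descent_lemma cs (by omega : 1 ≤ m) hda hdb (hord a b hab)
          set u₀ := π (alternatingWord a b m) with hu₀
          have hz : (s a * s b) ^ m = 1 := by
            rw [← hordm]; exact pow_orderOf_eq_one _
          have hu₀le : ℓ u₀ ≤ m :=
            le_trans (cs.length_wordProd_le _) (le_of_eq (length_alternatingWord a b m))
          have hu₀len : ℓ u₀ = m := by
            have h4 : ℓ w⁻¹ ≤ ℓ (w⁻¹ * u₀⁻¹) + ℓ u₀ := by
              calc ℓ w⁻¹ = ℓ ((w⁻¹ * u₀⁻¹) * u₀) := by rw [inv_mul_cancel_right]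
                _ ≤ ℓ (w⁻¹ * u₀⁻¹) + ℓ u₀ := cs.length_mul_le _ _
            omega
          refine ⟨1, (w⁻¹ * u₀⁻¹)⁻¹, a, b, u₀⁻¹, hab, hordm, ?_, ?_, ?_, ?_⟩
          · exact inv_mem (alt_mem_closure cs a b m)
          · intro v hv
            have := closure_length_le cs a b (by omega : 1 ≤ m) hz hv
            rw [cs.length_inv, hu₀len]
            exact this
          · group
          · rw [cs.length_one, cs.length_inv, cs.length_inv, hu₀len]
            rw [cs.length_inv] at hchain
            omega

end Stmt18

/-- Let `m ≥ 3` and let `(W, S)` be a Coxeter system in which, for any two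
distinct simple reflections `s, t`, the order of `st` is either `m` or infinite (in Mathlib,
`orderOf x = 0` means infinite order).  If `w ∈ W` admits two distinct reduced expressions,
then there exist `x, y ∈ W` and distinct simple reflections `s_i, s_j` with `s_i s_j` of order
`m` such that `w = x u y` and `l(w) = l(x) + l(u) + l(y)`, where `u` is the longest element of
the (finite dihedral) standard parabolic subgroup generated by `s_i` and `s_j`. -/
theorem stmt_18 {B W : Type*} [Group W] {M : CoxeterMatrix B} (cs : CoxeterSystem M W)
    (m : ℕ) (hm : 3 ≤ m)
    (hord : ∀ i j : B, i ≠ j → (orderOf (cs.simple i * cs.simple j) = m ∨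
      orderOf (cs.simple i * cs.simple j) = 0))
    (w : W) (L1 L2 : List B) (hne : L1 ≠ L2)
    (hL1 : cs.wordProd L1 = w) (hL1len : L1.length = cs.length w)
    (hL2 : cs.wordProd L2 = w) (hL2len : L2.length = cs.length w) :
    ∃ (x y : W) (i j : B) (u : W), i ≠ j ∧ orderOf (cs.simple i * cs.simple j) = m ∧
      u ∈ Subgroup.closure {cs.simple i, cs.simple j} ∧
      (∀ v ∈ Subgroup.closure {cs.simple i, cs.simple j}, cs.length v ≤ cs.length u) ∧
      w = x * u * y ∧ cs.length w = cs.length x + cs.length u + cs.length y := by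
  exact Stmt18.main_aux cs m hm hord (cs.length w) w le_rfl L1 L2 hne hL1 hL1len hL2 hL2len
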